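/- Let S=(1,s_2,s_3,...) be a packing sequence and let n be a positive integer. If 2^{i−1} ≤ s_i < 2^i holds for every index i with 2 ≤ i ≤ ⌊log_2 n⌋ + 1, then χ_S(P_n) = ⌊log_2 n⌋ + 1. -/

import Mathlib

open SimpleGraph

lemma pathWalk_bound {n : ℕ} {u v : Fin n} (p : (pathGraph n).Walk u v) :
    v.val ≤ u.val + p.length ∧ u.val ≤ v.val + p.length := by
  induction p with
  | nil => simp
  | cons hadj q ih =>
    rw [pathGraph_adj] at hadj
    simp only [Walk.length_cons]
    omega

lemma pathGraph_edist_le {n : ℕ} : ∀ (d : ℕ) (u v : Fin n), u.val ≤ v.val →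
    v.val - u.val ≤ d → (pathGraph n).edist u v ≤ (d : ℕ∞) := by
  intro d
  induction d with
  | zero =>
    intro u v h1 h2
    have : u = v := Fin.ext (by omega)
    subst this
    simp [edist_self]
  | succ d ih =>
    intro u v h1 h2
    rcases eq_or_lt_of_le h1 with heq | hlt
    · have : u = v := Fin.ext heq
      subst this
      simp [edist_self]
    · set w : Fin n := ⟨u.val + 1, by omega⟩ with hw
      have hadj : (pathGraph n).Adj u w := pathGraph_adj.mpr (Or.inl rfl)
      calc (pathGraph n).edist u v ≤ (pathGraph n).edist u w + (pathGraph n).edist w v :=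
            SimpleGraph.edist_triangle
        _ ≤ 1 + (d : ℕ∞) := by
            gcongr
            · exact (edist_eq_one_iff_adj.mpr hadj).le
            · exact ih w v (by simp [hw]; omega) (by simp [hw]; omega)
        _ = ((d + 1 : ℕ) : ℕ∞) := by push_cast; ring

lemma pathGraph_edist {n : ℕ} (u v : Fin n) (h : u.val ≤ v.val) :
    (pathGraph n).edist u v = ((v.val - u.val : ℕ) : ℕ∞) := by
  apply le_antisymm
  · exact pathGraph_edist_le _ u v h le_rfl
  · rw [edist_eq_sInf]
    refine le_sInf ?_
    rintro b ⟨p, rfl⟩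
    have hb := pathWalk_bound p
    have : (v.val - u.val : ℕ) ≤ p.length := by omega
    show ((v.val - u.val : ℕ) : ℕ∞) ≤ (p.length : ℕ∞)
    exact_mod_cast this

lemma keyL (s : ℕ → ℕ) : ∀ (k a n : ℕ) (φ : ℕ → ℕ),
    (∀ j, j < k → 2 ^ j ≤ s j) →
    (∀ x, a ≤ x → x < a + n → φ x < k) →
    (∀ x y, a ≤ x → x < y → y < a + n → φ x = φ y → s (φ x) < y - x) →
    n < 2 ^ k := by
  intro k
  induction k with
  | zero =>
    intro a n φ _ hb _
    by_contra hc
    push_neg at hc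
    exact absurd (hb a le_rfl (by omega)) (Nat.not_lt_zero _)
  | succ k ih =>
    intro a n φ hs hb hd
    have hpow : 2 ^ (k + 1) = 2 ^ k + 2 ^ k := by ring
    by_cases hT : ∃ x, a ≤ x ∧ x < a + n ∧ φ x = k
    · set m := Nat.find hT with hm
      obtain ⟨hm1, hm2, hm3⟩ := Nat.find_spec hT
      have huniq : ∀ x, a ≤ x → x < a + n → φ x = k → x = m := by
        by_contra hc
        push_neg at hc
        obtain ⟨y, hy1, hy2, hy3, hym⟩ := hc
        have hmy : m < y := lt_of_le_of_ne (Nat.find_min' hT ⟨hy1, hy2, hy3⟩) (Ne.symm hym)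
        have hT2 : ∃ z, (a ≤ z ∧ z < a + n ∧ φ z = k) ∧ m < z := ⟨y, ⟨hy1, hy2, hy3⟩, hmy⟩
        set y0 := Nat.find hT2 with hy0
        obtain ⟨⟨hz1, hz2, hz3⟩, hz4⟩ := Nat.find_spec hT2
        have hmid : ∀ x, m + 1 ≤ x → x < m + 1 + (y0 - m - 1) → φ x < k := by
          intro x hx1 hx2
          have hxan : x < a + n := by omega
          have hax : a ≤ x := by omega
          have := hb x hax hxan
          rcases Nat.lt_succ_iff_lt_or_eq.mp this with h' | h'
          · exact h'
          · exfalso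
            have : y0 ≤ x := Nat.find_min' hT2 ⟨⟨hax, hxan, h'⟩, by omega⟩
            omega
        have hlt : y0 - m - 1 < 2 ^ k :=
          ih (m + 1) (y0 - m - 1) φ (fun j hj => hs j (by omega)) hmid
            (fun x y hx hxy hy hφ => hd x y (by omega) hxy (by omega) hφ)
        have hsk : s k < y0 - m := by
          have := hd m y0 hm1 hz4 hz2 (by rw [hm3, hz3])
          rwa [hm3] at this
        have h2k : 2 ^ k ≤ s k := hs k (by omega)
        omega
      have hleft : m - a < 2 ^ k := by
        refine ih a (m - a) φ (fun j hj => hs j (by omega)) ?_ ?_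
        · intro x hx1 hx2
          have := hb x hx1 (by omega)
          rcases Nat.lt_succ_iff_lt_or_eq.mp this with h' | h'
          · exact h'
          · exfalso
            have := huniq x hx1 (by omega) h'
            omega
        · intro x y hx hxy hy hφ
          exact hd x y hx hxy (by omega) hφ
      have hright : a + n - m - 1 < 2 ^ k := by
        refine ih (m + 1) (a + n - m - 1) φ (fun j hj => hs j (by omega)) ?_ ?_
        · intro x hx1 hx2
          have := hb x (by omega) (by omega)
          rcases Nat.lt_succ_iff_lt_or_eq.mp this with h' | h'
          · exact h'
          · exfalso
            have := huniq x (by omega) (by omega) h'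
            omega
        · intro x y hx hxy hy hφ
          exact hd x y (by omega) hxy (by omega) hφ
      omega
    · push_neg at hT
      have := ih a n φ (fun j hj => hs j (by omega))
        (fun x hx1 hx2 => by
          have h1 := hb x hx1 hx2
          have h2 := hT x hx1 hx2
          omega)
        hd
      omega

lemma factorization_gap {A B i : ℕ} (hA : A ≠ 0) (hAB : A < B)
    (hfa : A.factorization 2 = i) (hfb : B.factorization 2 = i) :
    2 ^ (i + 1) ≤ B - A := by
  have hB : B ≠ 0 := by omega
  set a' := ordCompl[2] A with ha'
  set b' := ordCompl[2] B with hb'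
  have hAeq : 2 ^ i * a' = A := by
    have := Nat.ordProj_mul_ordCompl_eq_self A 2
    rw [ha', hfa]; rwa [hfa] at this
  have hBeq : 2 ^ i * b' = B := by
    have := Nat.ordProj_mul_ordCompl_eq_self B 2
    rw [hb', hfb]; rwa [hfb] at this
  have hoa : ¬ 2 ∣ a' := Nat.not_dvd_ordCompl Nat.prime_two hA
  have hob : ¬ 2 ∣ b' := Nat.not_dvd_ordCompl Nat.prime_two hB
  have hma : a' % 2 = 1 := by
    rcases Nat.mod_two_eq_zero_or_one a' with h | h
    · exact absurd (Nat.dvd_of_mod_eq_zero h) hoa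
    · exact h
  have hmb : b' % 2 = 1 := by
    rcases Nat.mod_two_eq_zero_or_one b' with h | h
    · exact absurd (Nat.dvd_of_mod_eq_zero h) hob
    · exact h
  have hab : a' < b' := by
    by_contra hcon
    push_neg at hcon
    have : 2 ^ i * b' ≤ 2 ^ i * a' := Nat.mul_le_mul_left _ hcon
    omega
  obtain ⟨c, hc⟩ : ∃ c, b' = a' + c := ⟨b' - a', by omega⟩
  have hc2 : 2 ≤ c := by omega
  have hBA : B = A + 2 ^ i * c := by
    rw [← hAeq, ← hBeq, hc, Nat.mul_add]
  have : 2 ^ (i + 1) ≤ 2 ^ i * c := by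
    calc 2 ^ (i + 1) = 2 ^ i * 2 := by ring
      _ ≤ 2 ^ i * c := Nat.mul_le_mul_left _ hc2
  omega


/-- `IsSPackingColoring G s φ` : `φ` is an `S`-packing coloring of `G` with colors
`Fin k`, where the value `s i` represents the entry `s_{i+1}` of the packing
sequence `S = (s_1, s_2, …)` (0-indexed encoding), and the color `j : Fin k`
represents color `j+1`: two distinct vertices sharing a color `i` (1-indexed)
must be at distance greater than `s_i`. -/
def IsSPackingColoring {V : Type*} (G : SimpleGraph V) (s : ℕ → ℕ) {k : ℕ}
    (φ : V → Fin k) : Prop :=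
  ∀ u v : V, u ≠ v → φ u = φ v → (s (φ u) : ℕ∞) < G.edist u v

/-- The `S`-packing chromatic number of `G`: the least `k` admitting an
`S`-packing `k`-coloring. -/
noncomputable def SPackingChromatic {V : Type*} (G : SimpleGraph V) (s : ℕ → ℕ) : ℕ :=
  sInf {k | ∃ φ : V → Fin k, IsSPackingColoring G s φ}

/-- `G` is `χ_S`-critical: every proper subgraph has a strictly smaller
`S`-packing chromatic number. -/
def SCritical {V : Type*} (G : SimpleGraph V) (s : ℕ → ℕ) : Prop :=
  ∀ H : G.Subgraph, H ≠ ⊤ → SPackingChromatic H.coe s < SPackingChromatic G s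

/-- `G` is `χ_S`-vertex-critical: deleting any vertex strictly decreases the
`S`-packing chromatic number. -/
def SVertexCritical {V : Type*} (G : SimpleGraph V) (s : ℕ → ℕ) : Prop :=
  ∀ v : V, SPackingChromatic (G.induce {u | u ≠ v}) s < SPackingChromatic G s

theorem stmt9 (s : ℕ → ℕ) (hmono : Monotone s) (hpos : ∀ i, 1 ≤ s i)
    (h1 : s 0 = 1) (n : ℕ) (hn : 1 ≤ n)
    (h : ∀ i, 2 ≤ i → i ≤ Nat.log 2 n + 1 →
      2 ^ (i - 1) ≤ s (i - 1) ∧ s (i - 1) < 2 ^ i) :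
    SPackingChromatic (pathGraph n) s = Nat.log 2 n + 1 := by
  set L := Nat.log 2 n with hL
  have hn0 : n ≠ 0 := by omega
  have hs_lt : ∀ i : ℕ, i ≤ L → s i < 2 ^ (i + 1) := by
    intro i hi
    rcases Nat.eq_zero_or_pos i with rfl | hi1
    · rw [h1]; norm_num
    · have := (h (i + 1) (by omega) (by omega)).2
      simpa using this
  have hs_ge : ∀ i : ℕ, i ≤ L → 2 ^ i ≤ s i := by
    intro i hi
    rcases Nat.eq_zero_or_pos i with rfl | hi1
    · rw [h1]; norm_num
    · have := (h (i + 1) (by omega) (by omega)).1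
      simpa using this
  have hbound : ∀ v : Fin n, (v.val + 1).factorization 2 ≤ L := by
    intro v
    have hd : 2 ^ ((v.val + 1).factorization 2) ∣ v.val + 1 := Nat.ordProj_dvd _ 2
    have hle : 2 ^ ((v.val + 1).factorization 2) ≤ n :=
      le_trans (Nat.le_of_dvd (by omega) hd) (by omega)
    exact (Nat.le_log_iff_pow_le one_lt_two hn0).mpr hle
  set φ0 : Fin n → Fin (L + 1) :=
    fun v => ⟨(v.val + 1).factorization 2, Nat.lt_succ_of_le (hbound v)⟩ with hφ0
  have hmem : (L + 1) ∈ {k | ∃ φ : Fin n → Fin k, IsSPackingColoring (pathGraph n) s φ} := by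
    refine ⟨φ0, ?_⟩
    have key : ∀ u v : Fin n, u.val < v.val → φ0 u = φ0 v →
        (s (φ0 u) : ℕ∞) < (pathGraph n).edist u v := by
      intro u v huv hφ
      have hiv : (v.val + 1).factorization 2 = (u.val + 1).factorization 2 := by
        have := congrArg Fin.val hφ
        simpa [hφ0] using this.symm
      have hgap := factorization_gap (A := u.val + 1) (B := v.val + 1)
        (by omega) (by omega) rfl hiv
      rw [pathGraph_edist u v (le_of_lt huv)]
      have hcol : (φ0 u : ℕ) = (u.val + 1).factorization 2 := rfl
      have hlt : s ((φ0 u : ℕ)) < v.val - u.val := by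
        rw [hcol]
        have := hs_lt ((u.val + 1).factorization 2) (hbound u)
        omega
      exact_mod_cast hlt
    intro u v hne hφ
    rcases lt_trichotomy u.val v.val with h' | h' | h'
    · exact key u v h' hφ
    · exact absurd (Fin.ext h') hne
    · rw [SimpleGraph.edist_comm, hφ]
      exact key v u h' hφ.symm
  have hlow : ∀ k ∈ {k | ∃ φ : Fin n → Fin k, IsSPackingColoring (pathGraph n) s φ},
      L + 1 ≤ k := by
    intro k hk
    obtain ⟨φ, hφ⟩ := hk
    by_contra hc
    push_neg at hc
    have hkL : k ≤ L := by omega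
    set ψ : ℕ → ℕ := fun x => if hx : x < n then (φ ⟨x, hx⟩).val else 0 with hψ
    have hkey := keyL s k 0 n ψ
      (fun j hj => hs_ge j (by omega))
      (fun x hx1 hx2 => by
        have hxn : x < n := by omega
        simp only [hψ, hxn, dif_pos]
        exact (φ ⟨x, hxn⟩).isLt)
      (fun x y hx hxy hy hψeq => by
        have hxn : x < n := by omega
        have hyn : y < n := by omega
        simp only [hψ, hxn, hyn, dif_pos] at hψeq ⊢
        have hfeq : φ ⟨x, hxn⟩ = φ ⟨y, hyn⟩ := Fin.ext hψeq
        have := hφ ⟨x, hxn⟩ ⟨y, hyn⟩ (by simp [Fin.ext_iff]; omega) hfeq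
        rw [pathGraph_edist ⟨x, hxn⟩ ⟨y, hyn⟩ (le_of_lt hxy)] at this
        exact_mod_cast this)
    have h2 : 2 ^ k ≤ 2 ^ L := Nat.pow_le_pow_right (by norm_num) hkL
    have h3 : 2 ^ L ≤ n := Nat.pow_log_le_self 2 hn0
    omega
  exact le_antisymm (Nat.sInf_le hmem) (le_csInf ⟨_, hmem⟩ hlow)
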